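/- Let ℓᵢ(x) = aᵢ + ⟨hᵢ, x⟩, i = 1,2,3, be affine functions on a real Hilbert space E, let C ⊆ E be nonempty closed convex, x⁰ ∈ E, ρ > 0. Consider the problem min over x ∈ C, r ∈ ℝ of r + (ρ/2)‖x − x⁰‖² subject to ℓᵢ(x) ≤ r for i = 1,2,3. If θ ∈ Δ₃ (the probability simplex in ℝ³) and z = Π_C(x⁰ − (1/ρ)Σᵢ θᵢ hᵢ) satisfy the complementarity condition θᵢ(ℓᵢ(z) − max_j ℓ_j(z)) = 0 for all i, then (z, max_j ℓ_j(z)) is the unique optimal solution in the x-variable of the problem. -/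

import Mathlib

open scoped RealInnerProductSpace

/-- KKT certificate for the three-cut proximal subproblem: if `θ` lies in the
probability simplex, `z` is the projection of `x⁰ - (1/ρ)Σθᵢhᵢ` onto `C`, and the
complementarity condition holds, then `(z, max_j ℓ_j(z))` is optimal and `z` is the
unique optimal `x`-solution. -/
theorem stmt7 {E : Type*} [NormedAddCommGroup E] [InnerProductSpace ℝ E] [CompleteSpace E]
    (C : Set E) (hCne : C.Nonempty) (hCcl : IsClosed C) (hCcv : Convex ℝ C)
    (a : Fin 3 → ℝ) (h : Fin 3 → E) (x0 : E) (ρ : ℝ) (hρ : 0 < ρ)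
    (θ : Fin 3 → ℝ) (hθ0 : ∀ i, 0 ≤ θ i) (hθ1 : ∑ i, θ i = 1)
    (z : E) (hzC : z ∈ C)
    (hproj : ∀ w ∈ C, ‖(x0 - ρ⁻¹ • ∑ i, θ i • h i) - z‖
      ≤ ‖(x0 - ρ⁻¹ • ∑ i, θ i • h i) - w‖)
    (hcomp : ∀ i, θ i * ((a i + ⟪h i, z⟫)
      - max (max (a 0 + ⟪h 0, z⟫) (a 1 + ⟪h 1, z⟫)) (a 2 + ⟪h 2, z⟫)) = 0) :
    (∀ x ∈ C, ∀ r : ℝ, (∀ i, a i + ⟪h i, x⟫ ≤ r) →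
      max (max (a 0 + ⟪h 0, z⟫) (a 1 + ⟪h 1, z⟫)) (a 2 + ⟪h 2, z⟫)
        + ρ / 2 * ‖z - x0‖ ^ 2 ≤ r + ρ / 2 * ‖x - x0‖ ^ 2) ∧
    (∀ x ∈ C, ∀ r : ℝ, (∀ i, a i + ⟪h i, x⟫ ≤ r) →
      r + ρ / 2 * ‖x - x0‖ ^ 2
        ≤ max (max (a 0 + ⟪h 0, z⟫) (a 1 + ⟪h 1, z⟫)) (a 2 + ⟪h 2, z⟫)
          + ρ / 2 * ‖z - x0‖ ^ 2 → x = z) := by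
  set s : E := ∑ i, θ i • h i with hs
  set p : E := x0 - ρ⁻¹ • s with hp
  set M : ℝ := max (max (a 0 + ⟪h 0, z⟫) (a 1 + ⟪h 1, z⟫)) (a 2 + ⟪h 2, z⟫) with hMdef
  -- variational inequality
  have hVI : ∀ w ∈ C, ⟪p - z, w - z⟫ ≤ 0 := by
    have : Nonempty C := hCne.to_subtype
    have heq : ‖p - z‖ = ⨅ w : C, ‖p - w‖ := by
      refine le_antisymm (le_ciInf fun w => hproj w w.2) ?_
      exact ciInf_le ⟨0, fun b ⟨w, hw⟩ => hw ▸ norm_nonneg _⟩ (⟨z, hzC⟩ : C)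
    exact (norm_eq_iInf_iff_real_inner_le_zero hCcv hzC).mp heq
  -- M equals the weighted sum at z
  have hMz : ∑ i, θ i * (a i + ⟪h i, z⟫) = M := by
    have heach : ∀ i, θ i * (a i + ⟪h i, z⟫) = θ i * M := by
      intro i
      have := hcomp i
      rw [mul_sub, sub_eq_zero] at this
      exact this
    rw [Finset.sum_congr rfl fun i _ => heach i, ← Finset.sum_mul, hθ1, one_mul]
  -- main key inequality
  have key : ∀ x ∈ C, ∀ r : ℝ, (∀ i, a i + ⟪h i, x⟫ ≤ r) →
      M + ρ / 2 * ‖z - x0‖ ^ 2 + ρ / 2 * ‖x - z‖ ^ 2 ≤ r + ρ / 2 * ‖x - x0‖ ^ 2 := by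
    intro x hx r hr
    have hsum_le : ∑ i, θ i * (a i + ⟪h i, x⟫) ≤ r := by
      calc ∑ i, θ i * (a i + ⟪h i, x⟫) ≤ ∑ i, θ i * r :=
            Finset.sum_le_sum fun i _ => mul_le_mul_of_nonneg_left (hr i) (hθ0 i)
        _ = r := by rw [← Finset.sum_mul, hθ1, one_mul]
    have hsinner : ⟪s, x - z⟫ = ∑ i, θ i * ⟪h i, x - z⟫ := by
      rw [hs, sum_inner]
      exact Finset.sum_congr rfl fun i _ => real_inner_smul_left _ _ _
    have hsum_split : ∑ i, θ i * (a i + ⟪h i, x⟫)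
        = ∑ i, θ i * (a i + ⟪h i, z⟫) + ⟪s, x - z⟫ := by
      rw [hsinner, ← Finset.sum_add_distrib]
      refine Finset.sum_congr rfl fun i _ => ?_
      rw [inner_sub_right]; ring
    have hMs : M + ⟪s, x - z⟫ ≤ r := by
      rw [← hMz]; linarith [hsum_split ▸ hsum_le]
    have hps : ⟪p - z, x - z⟫ = ⟪x0 - z, x - z⟫ - ρ⁻¹ * ⟪s, x - z⟫ := by
      have : p - z = (x0 - z) - ρ⁻¹ • s := by rw [hp]; abel
      rw [this, inner_sub_left, real_inner_smul_left]
    have hsval : ⟪s, x - z⟫ = ρ * (⟪x0 - z, x - z⟫ - ⟪p - z, x - z⟫) := by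
      rw [hps]; field_simp; ring
    have hnorm : ‖x - x0‖ ^ 2 = ‖x - z‖ ^ 2 + 2 * ⟪x - z, z - x0⟫ + ‖z - x0‖ ^ 2 := by
      have hxx : x - x0 = (x - z) + (z - x0) := by abel
      rw [hxx, norm_add_sq_real]
    have hsym : ⟪x - z, z - x0⟫ = - ⟪x0 - z, x - z⟫ := by
      rw [show z - x0 = -(x0 - z) by abel, inner_neg_right, real_inner_comm]
    have hVIx := hVI x hx
    nlinarith [mul_nonneg hρ.le (neg_nonneg.mpr hVIx)]
  constructor
  · intro x hx r hr
    have := key x hx r hr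
    nlinarith [sq_nonneg ‖x - z‖, mul_nonneg hρ.le (sq_nonneg ‖x - z‖)]
  · intro x hx r hr hle
    have hk := key x hx r hr
    have hzero : ‖x - z‖ ^ 2 ≤ 0 := by nlinarith
    have : ‖x - z‖ = 0 := by nlinarith [norm_nonneg (x - z), sq_nonneg ‖x - z‖]
    have := norm_sub_eq_zero_iff.mp this
    exact this
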